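/- Let n be a positive integer, K and N positive integers with K < N ≤ 2^n, and let q* be the largest q in [0, n] such that the sum over r from 0 to q-1 of binomial(n, r) is at most N - K. Then the (N-K+1)-th smallest value of the multiset {2^{w(i)} : 0 ≤ i ≤ 2^n - 1}, where w(i) is the Hamming weight of i, is at least 2^{q*}. -/

import Mathlib

lemma bitsum_eq (i : ℕ) : ∀ m : ℕ, i < 2 ^ m →
    (∑ j ∈ Finset.range m, if i.testBit j then 1 else 0) = (Nat.digits 2 i).sum := by
  induction i using Nat.strong_induction_on with
  | _ i ih =>
    intro m hm
    rcases Nat.eq_zero_or_pos i with rfl | hi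
    · simp [Nat.zero_testBit]
    · obtain ⟨m', rfl⟩ : ∃ m', m = m' + 1 := by
        cases m with
        | zero => simp at hm; omega
        | succ m' => exact ⟨m', rfl⟩
      rw [Finset.sum_range_succ']
      have h2 : i / 2 < 2 ^ m' := by
        rw [Nat.div_lt_iff_lt_mul (by norm_num)]
        rw [pow_succ] at hm; omega
      have ihv := ih (i / 2) (Nat.div_lt_self hi one_lt_two) m' h2
      simp only [Nat.testBit_add_one] at *
      rw [ihv, Nat.digits_def' (by norm_num : 1 < 2) hi, List.sum_cons]
      have : (if i.testBit 0 then 1 else 0) = i % 2 := by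
        rcases Nat.mod_two_eq_zero_or_one i with h | h <;>
          simp [Nat.testBit_zero, h]
      omega

lemma count_lt (n q : ℕ) :
    ((Finset.range (2 ^ n)).filter (fun i => (Nat.digits 2 i).sum < q)).card
      ≤ ∑ r ∈ Finset.range q, n.choose r := by
  classical
  have key : ∀ i < 2 ^ n,
      ((Finset.range n).filter (fun j => i.testBit j)).card = (Nat.digits 2 i).sum := by
    intro i hi
    rw [Finset.card_filter]
    exact bitsum_eq i n hi
  calc ((Finset.range (2 ^ n)).filter (fun i => (Nat.digits 2 i).sum < q)).card
      ≤ ((Finset.range q).biUnion (fun r => Finset.powersetCard r (Finset.range n))).card := by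
        apply Finset.card_le_card_of_injOn
          (fun i => (Finset.range n).filter (fun j => i.testBit j))
        · intro i hi
          simp only [Finset.coe_filter, Finset.mem_range, Set.mem_setOf_eq] at hi
          rw [Finset.mem_coe, Finset.mem_biUnion]
          refine ⟨((Finset.range n).filter (fun j => i.testBit j)).card, ?_, ?_⟩
          · rw [Finset.mem_range, key i hi.1]; exact hi.2
          · rw [Finset.mem_powersetCard]; exact ⟨Finset.filter_subset _ _, rfl⟩
        · intro a ha b hb hab
          simp only [Finset.coe_filter, Finset.mem_range, Set.mem_setOf_eq] at ha hb
          apply Nat.eq_of_testBit_eq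
          intro j
          by_cases hj : j < n
          · have := Finset.ext_iff.mp hab j
            simpa [Finset.mem_filter, Finset.mem_range, hj] using this
          · rw [Nat.testBit_eq_false_of_lt (lt_of_lt_of_le ha.1 (Nat.pow_le_pow_right (by norm_num) (le_of_not_gt hj))),
              Nat.testBit_eq_false_of_lt (lt_of_lt_of_le hb.1 (Nat.pow_le_pow_right (by norm_num) (le_of_not_gt hj)))]
    _ ≤ ∑ r ∈ Finset.range q, (Finset.powersetCard r (Finset.range n)).card :=
        Finset.card_biUnion_le
    _ = ∑ r ∈ Finset.range q, n.choose r := by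
        simp [Finset.card_powersetCard]

theorem kth_smallest_leafset_lower_bound (n N K qs : ℕ)
    (hn : 0 < n) (hK : 0 < K) (hKN : K < N) (hN : N ≤ 2 ^ n)
    (hqs : qs ≤ n)
    (hsum : ∑ r ∈ Finset.range qs, n.choose r ≤ N - K)
    (hmax : ∀ q, q ≤ n → (∑ r ∈ Finset.range q, n.choose r ≤ N - K) → q ≤ qs) :
    2 ^ qs ≤
      (Multiset.sort
        ((Multiset.range (2 ^ n)).map (fun i => 2 ^ ((Nat.digits 2 i).sum))) (· ≤ ·)).getD (N - K) 0 := by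
  classical
  set f : ℕ → ℕ := fun i => 2 ^ ((Nat.digits 2 i).sum) with hf
  set S : Multiset ℕ := (Multiset.range (2 ^ n)).map f with hS
  set l : List ℕ := Multiset.sort S (· ≤ ·) with hl
  have hlen : l.length = 2 ^ n := by
    rw [hl]
    simp [hS]
  have hidx : N - K < l.length := by
    rw [hlen]
    exact lt_of_lt_of_le (Nat.sub_lt (by omega) hK) hN
  -- count of elements < 2^qs in l is at most N - K
  have hperm : l.Perm ((List.range (2 ^ n)).map f) := by
    have : (l : Multiset ℕ) = ((List.range (2 ^ n)).map f : List ℕ) := by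
      rw [hl, Multiset.sort_eq]
      rfl
    exact Multiset.coe_eq_coe.mp this
  have hcount : l.countP (fun x => decide (x < 2 ^ qs)) ≤ N - K := by
    rw [hperm.countP_eq, List.countP_map]
    have : ∀ i, ((fun x => decide (x < 2 ^ qs)) ∘ f) i
        = decide ((Nat.digits 2 i).sum < qs) := by
      intro i
      simp only [Function.comp, hf]
      congr 1
      simp only [eq_iff_iff]
      exact Nat.pow_lt_pow_iff_right (by norm_num)
    rw [funext this]
    calc List.countP (fun i => decide ((Nat.digits 2 i).sum < qs)) (List.range (2 ^ n))
        = ((Finset.range (2 ^ n)).filter (fun i => (Nat.digits 2 i).sum < qs)).card := by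
          rw [Finset.card_filter]
          induction (2 ^ n) with
          | zero => simp
          | succ k ihk =>
            rw [List.range_succ, List.countP_append, ihk, Finset.sum_range_succ]
            simp [List.countP_cons]
      _ ≤ ∑ r ∈ Finset.range qs, n.choose r := count_lt n qs
      _ ≤ N - K := hsum
  by_contra hlt
  push_neg at hlt
  rw [List.getD_eq_getElem l 0 hidx] at hlt
  -- all entries of take (N-K+1) are < 2^qs
  have hsorted : l.Pairwise (· ≤ ·) := Multiset.pairwise_sort _ _
  have htake : ∀ x ∈ l.take (N - K + 1), decide (x < 2 ^ qs) = true := by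
    intro x hx
    rw [List.mem_take_iff_getElem] at hx
    obtain ⟨j, hj, rfl⟩ := hx
    have hjlt : j < l.length := lt_of_lt_of_le (lt_min_iff.mp hj).1 (by omega)
    have hle : l[j] ≤ l[N - K] := by
      have := hsorted.rel_get_of_le (a := ⟨j, hjlt⟩) (b := ⟨N - K, hidx⟩)
        (by simp [Fin.le_def]; omega)
      simpa using this
    simp only [decide_eq_true_eq]
    omega
  have h1 : (l.take (N - K + 1)).countP (fun x => decide (x < 2 ^ qs))
      = (l.take (N - K + 1)).length := List.countP_eq_length.mpr htake
  have h2 : (l.take (N - K + 1)).length = N - K + 1 := by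
    rw [List.length_take]
    omega
  have h3 := List.Sublist.countP_le (p := fun x => decide (x < 2 ^ qs)) (List.take_sublist (N - K + 1) l)
  omega
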